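/- Composition of generalized Laplace and generalized Fourier cosine transforms: L_{α,μ}{ F_{c,δ,μ}{f(t); x}; y } = (1/μ) Γ(α/μ) ∫₀^∞ t^{δ-1} (y^{2μ} + t^{2μ})^{-α/(2μ)} cos[(α/μ) arctan(t^μ/y^μ)] f(t) dt. -/

import Mathlib

open MeasureTheory Set

section Aux
open Complex Filter

lemma myCont (c : ℂ) : ContinuousOn (fun u : ℝ => (u:ℂ) ^ c) (Ioi 0) := fun u hu =>
  (continuousAt_ofReal_cpow_const u c (Or.inr (ne_of_gt hu))).continuousWithinAt

lemma myMeas (s : ℝ) (z : ℂ) :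
    AEStronglyMeasurable (fun u : ℝ => (u:ℂ) ^ ((s:ℂ)-1) * Complex.exp (-(z * u)))
      (volume.restrict (Ioi 0)) :=
  ((myCont _).mul ((continuous_const.mul Complex.continuous_ofReal).neg.cexp).continuousOn
    ).aestronglyMeasurable measurableSet_Ioi

lemma myIntegrable (s : ℝ) (hs : 0 < s) {z : ℂ} (hz : 0 < z.re) :
    IntegrableOn (fun u : ℝ => (u:ℂ) ^ ((s:ℂ)-1) * Complex.exp (-(z * u))) (Ioi 0) := by
  have hbd : IntegrableOn (fun u : ℝ => u ^ (s-1) * Real.exp (-z.re * u ^ (1:ℝ))) (Ioi 0) :=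
    integrableOn_rpow_mul_exp_neg_mul_rpow (by linarith) zero_lt_one hz
  refine Integrable.mono' hbd (myMeas s z) ?_
  filter_upwards [ae_restrict_mem measurableSet_Ioi] with u hu
  rw [mem_Ioi] at hu
  rw [norm_mul, Complex.norm_exp,
    Complex.norm_cpow_eq_rpow_re_of_pos hu]
  simp only [Complex.sub_re, Complex.ofReal_re, Complex.one_re, Complex.neg_re,
    Complex.mul_re, Complex.ofReal_im, Real.rpow_one]
  rw [mul_zero, sub_zero]
  apply le_of_eq
  congr 1
  ring

lemma gamma_cexp (s : ℝ) (hs : 0 < s) {z : ℂ} (hz : 0 < z.re) :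
    ∫ u in Ioi (0:ℝ), (u:ℂ) ^ ((s:ℂ)-1) * Complex.exp (-(z * u))
      = Complex.Gamma s * z ^ (-(s:ℂ)) := by
  set U : Set ℂ := {w : ℂ | 0 < w.re} with hU
  have hUopen : IsOpen U := isOpen_lt continuous_const Complex.continuous_re
  have hUconn : IsPreconnected U := (convex_halfSpace_re_gt (0:ℝ)).isPreconnected
  set F : ℂ → ℝ → ℂ := fun w u => (u:ℂ) ^ ((s:ℂ)-1) * Complex.exp (-(w * u)) with hF
  set f : ℂ → ℂ := fun w => ∫ u in Ioi (0:ℝ), F w u with hf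
  set g : ℂ → ℂ := fun w => Complex.Gamma s * w ^ (-(s:ℂ)) with hg
  -- f is differentiable on U
  have hfd : DifferentiableOn ℂ f U := by
    intro z₀ hz₀
    rw [hU, mem_setOf_eq] at hz₀
    set ε : ℝ := z₀.re / 2 with hε
    have hεpos : 0 < ε := by positivity
    have key := hasDerivAt_integral_of_dominated_loc_of_deriv_le (μ := volume.restrict (Ioi 0))
      (F := F) (F' := fun w u => (u:ℂ) ^ ((s:ℂ)-1) * (Complex.exp (-(w * u)) * (-(u:ℂ))))
      (x₀ := z₀) (bound := fun u => u ^ s * Real.exp (-(z₀.re/2) * u)) (Metric.ball_mem_nhds z₀ hεpos)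
      (Eventually.of_forall fun w => myMeas s w) (myIntegrable s hs hz₀)
      ?_ ?_ ?_ ?_
    · exact (key.2.differentiableAt).differentiableWithinAt
    · exact ((myCont _).mul (((continuous_const.mul Complex.continuous_ofReal).neg.cexp).mul
        Complex.continuous_ofReal.neg).continuousOn).aestronglyMeasurable measurableSet_Ioi
    · filter_upwards [ae_restrict_mem measurableSet_Ioi] with u hu
      rw [mem_Ioi] at hu
      intro w hw
      rw [Metric.mem_ball] at hw
      have hwre : z₀.re / 2 ≤ w.re := by
        have := abs_re_le_norm (w - z₀)
        have h2 : |w.re - z₀.re| < ε := by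
          rw [← Complex.sub_re]
          calc |(w - z₀).re| ≤ ‖w - z₀‖ := abs_re_le_norm _
            _ < ε := by rwa [Complex.dist_eq] at hw
        have := abs_lt.mp h2
        linarith [this.1]
      rw [norm_mul, norm_mul,
        Complex.norm_exp, Complex.norm_cpow_eq_rpow_re_of_pos hu, norm_neg,
        Complex.norm_real, Real.norm_eq_abs, abs_of_pos hu]
      simp only [Complex.sub_re, Complex.ofReal_re, Complex.one_re, Complex.neg_re,
        Complex.mul_re, Complex.ofReal_im, mul_zero, sub_zero]
      have h1 : u ^ (s-1) * (Real.exp (-(w.re * u)) * u) = u ^ s * Real.exp (-(w.re*u)) := by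
        rw [mul_comm (Real.exp _) u, ← mul_assoc, ← Real.rpow_add_one hu.ne', sub_add_cancel]
      rw [h1]
      exact mul_le_mul_of_nonneg_left (Real.exp_le_exp.mpr (by nlinarith))
        (Real.rpow_nonneg hu.le _)
    · have := integrableOn_rpow_mul_exp_neg_mul_rpow (p := 1) (s := s) (b := z₀.re/2)
        (by linarith) zero_lt_one (by positivity)
      refine this.congr_fun (fun u hu => by simp only [Real.rpow_one]) measurableSet_Ioi
    · filter_upwards [ae_restrict_mem measurableSet_Ioi] with u hu
      intro w hw
      simpa using (((hasDerivAt_id w).mul_const (u:ℂ)).neg.cexp).const_mul ((u:ℂ) ^ ((s:ℂ)-1))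
  -- g differentiable on U
  have hgd : DifferentiableOn ℂ g U := by
    intro w hw
    rw [hU, mem_setOf_eq] at hw
    exact ((((hasDerivAt_id w).cpow_const
      (Or.inl hw)).differentiableAt.const_mul _)).differentiableWithinAt
  -- they agree on the positive real axis
  have hreal : ∀ x : ℝ, 0 < x → f (x:ℂ) = g (x:ℂ) := by
    intro x hx
    rw [hf, hg, hF]
    simp only
    rw [integral_cpow_mul_exp_neg_mul_Ioi (by simpa using hs) hx]
    rw [mul_comm]
    congr 1
    rw [one_div, ← Complex.ofReal_inv, Complex.cpow_neg]
    rw [show ((x⁻¹ : ℝ) : ℂ) = ((x:ℂ))⁻¹ by push_cast; ring]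
    rw [Complex.inv_cpow]
    rw [Complex.arg_ofReal_of_nonneg hx.le]
    exact Real.pi_ne_zero.symm
  -- identity theorem
  have hfreq : ∃ᶠ w in nhdsWithin (1:ℂ) {(1:ℂ)}ᶜ, f w = g w := by
    have htend : Tendsto (fun x : ℝ => (x:ℂ)) (nhdsWithin 1 (Ioi 1)) (nhdsWithin (1:ℂ) {(1:ℂ)}ᶜ) := by
      rw [tendsto_nhdsWithin_iff]
      constructor
      · exact (Complex.continuous_ofReal.tendsto 1).mono_left nhdsWithin_le_nhds
      · filter_upwards [self_mem_nhdsWithin] with x hx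
        rw [mem_Ioi] at hx
        simp only [mem_compl_iff, mem_singleton_iff]
        exact_mod_cast ne_of_gt hx
    refine htend.frequently (Eventually.frequently ?_)
    filter_upwards [self_mem_nhdsWithin] with x hx
    exact hreal x (lt_trans zero_lt_one hx)
  have heq := (hfd.analyticOnNhd hUopen).eqOn_of_preconnected_of_frequently_eq
    (hgd.analyticOnNhd hUopen) hUconn (by simp [hU] : (1:ℂ) ∈ U) hfreq
  exact heq (by simpa [hU] using hz)

lemma inner_formula (s : ℝ) (hs : 0 < s) {a b : ℝ} (ha : 0 < a) (hb : 0 ≤ b) :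
    ∫ u in Ioi (0:ℝ), u ^ (s-1) * Real.exp (-(a*u)) * Real.cos (b*u)
      = Real.Gamma s * ((a^2 + b^2) ^ (-(s/2)) * Real.cos (s * Real.arctan (b/a))) := by
  set z : ℂ := (a:ℂ) - (b:ℂ)*Complex.I with hz
  have hzre : z.re = a := by simp [hz]
  have hzim : z.im = -b := by simp [hz]
  have hzre' : 0 < z.re := by rwa [hzre]
  have hzne : z ≠ 0 := fun h => by rw [h] at hzre'; simp at hzre'
  set r : ℝ := Real.sqrt (a^2 + b^2) with hr
  have hrpos : 0 < r := Real.sqrt_pos.mpr (by positivity)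
  have habs : ‖z‖ = r := by
    rw [Complex.norm_def, Complex.normSq_apply, hzre, hzim]
    congr 1; ring
  have harg : z.arg = - Real.arctan (b/a) := by
    have h1 : z.arg = Real.arcsin (z.im / ‖z‖) := by
      rw [Complex.arg, if_pos (le_of_lt hzre')]
    rw [h1, habs, hzim, Real.arctan_eq_arcsin, ← Real.arcsin_neg]
    congr 1
    have hsq : Real.sqrt (1 + (b/a)^2) = r / a := by
      have h2 : (1 + (b/a)^2) = (a^2+b^2)/a^2 := by field_simp
      rw [h2, Real.sqrt_div (by positivity), Real.sqrt_sq ha.le]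
    rw [hsq]
    field_simp
  have step1 : ∫ u in Ioi (0:ℝ), u ^ (s-1) * Real.exp (-(a*u)) * Real.cos (b*u)
      = ∫ u in Ioi (0:ℝ), ((u:ℂ) ^ ((s:ℂ)-1) * Complex.exp (-(z * u))).re := by
    refine setIntegral_congr_fun measurableSet_Ioi (fun u hu => ?_)
    rw [mem_Ioi] at hu
    have h1 : (u:ℂ) ^ ((s:ℂ)-1) = ((u ^ (s-1) : ℝ) : ℂ) := by
      rw [Complex.ofReal_cpow hu.le]; norm_num
    rw [h1, Complex.re_ofReal_mul, Complex.exp_re]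
    have h2 : (-(z * u)).re = -(a*u) := by simp [hzre, hzim, Complex.mul_re]
    have h3 : (-(z * u)).im = b*u := by simp [hzre, hzim, Complex.mul_im]
    rw [h2, h3, mul_assoc]
  rw [step1]
  have hre := integral_re (μ := volume.restrict (Ioi 0)) (myIntegrable s hs hzre')
  simp only [RCLike.re_to_complex] at hre
  rw [hre, gamma_cexp s hs hzre', Complex.Gamma_ofReal, Complex.re_ofReal_mul]
  congr 1
  rw [Complex.cpow_def_of_ne_zero hzne, Complex.exp_re]
  have h4 : (Complex.log z * -(s:ℂ)).re = Real.log r * (-s) := by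
    rw [Complex.mul_re, Complex.log_re, habs]
    simp
  have h5 : (Complex.log z * -(s:ℂ)).im = s * Real.arctan (b/a) := by
    rw [Complex.mul_im, Complex.log_im, harg]
    simp
    ring
  rw [h4, h5, ← Real.rpow_def_of_pos hrpos]
  congr 1
  rw [hr, Real.sqrt_eq_rpow, ← Real.rpow_mul (by positivity)]
  congr 1
  ring


end Aux

theorem laplace_fourier_cosine_composition (α δ μ y : ℝ) (f : ℝ → ℝ)
    (hμ : 0 < μ) (hα : μ < α) (hy : 0 < y) (hf : Measurable f)
    (habs : IntegrableOn (fun t => t ^ (δ - 1) * f t) (Ioi 0))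
    (hint : IntegrableOn
      (fun p : ℝ × ℝ =>
        p.1 ^ (α - 1) * Real.exp (-(y ^ μ * p.1 ^ μ)) *
          (p.2 ^ (δ - 1) * Real.cos (p.1 ^ μ * p.2 ^ μ) * f p.2))
      (Ioi 0 ×ˢ Ioi 0)) :
    ∫ x in Ioi (0:ℝ), x ^ (α - 1) * Real.exp (-(y ^ μ * x ^ μ)) *
        ∫ t in Ioi (0:ℝ), t ^ (δ - 1) * Real.cos (x ^ μ * t ^ μ) * f t
      = (1 / μ) * Real.Gamma (α / μ) *
        ∫ t in Ioi (0:ℝ), t ^ (δ - 1) * (y ^ (2 * μ) + t ^ (2 * μ)) ^ (-(α / (2 * μ))) *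
          Real.cos ((α / μ) * Real.arctan (t ^ μ / y ^ μ)) * f t := by
  have hs : 0 < α / μ := div_pos (lt_trans hμ hα) hμ
  have hyμ : 0 < y ^ μ := Real.rpow_pos_of_pos hy μ
  -- inner x-integral evaluation
  have key : ∀ t : ℝ, 0 < t →
      (∫ x in Ioi (0:ℝ), x ^ (α-1) * Real.exp (-(y^μ * x^μ)) * Real.cos (x^μ * t^μ))
        = (1/μ) * Real.Gamma (α/μ) * ((y^(2*μ) + t^(2*μ)) ^ (-(α/(2*μ))) *
            Real.cos ((α/μ) * Real.arctan (t^μ / y^μ))) := by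
    intro t ht
    have htμ : 0 ≤ t ^ μ := Real.rpow_nonneg ht.le μ
    have hsub := integral_comp_rpow_Ioi
      (fun u => u ^ (α/μ - 1) * Real.exp (-(y^μ * u)) * Real.cos (t^μ * u)) (ne_of_gt hμ)
    have hLeq : ∫ x in Ioi (0:ℝ), (|μ| * x ^ (μ-1)) •
        ((x^μ) ^ (α/μ - 1) * Real.exp (-(y^μ * x^μ)) * Real.cos (t^μ * x^μ))
        = μ * ∫ x in Ioi (0:ℝ), x ^ (α-1) * Real.exp (-(y^μ * x^μ)) * Real.cos (x^μ * t^μ) := by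
      rw [← integral_const_mul]
      refine setIntegral_congr_fun measurableSet_Ioi (fun x hx => ?_)
      rw [mem_Ioi] at hx
      have h1 : (x^μ) ^ (α/μ - 1) = x ^ (α - μ) := by
        rw [← Real.rpow_mul hx.le]
        congr 1
        field_simp
      rw [h1, smul_eq_mul, abs_of_pos hμ, mul_comm (t^μ) (x^μ)]
      have h2 : x ^ (μ-1) * x ^ (α-μ) = x ^ (α-1) := by
        rw [← Real.rpow_add hx]
        congr 1
        ring
      calc μ * x ^ (μ-1) * (x ^ (α-μ) * Real.exp (-(y^μ * x^μ)) * Real.cos (x^μ * t^μ))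
          = μ * ((x ^ (μ-1) * x ^ (α-μ)) * Real.exp (-(y^μ * x^μ)) * Real.cos (x^μ * t^μ)) := by
            ring
        _ = _ := by rw [h2]
    have hIF := inner_formula (α/μ) hs hyμ htμ
    rw [hLeq, hIF] at hsub
    have hμne : μ ≠ 0 := ne_of_gt hμ
    have e1 : (y^μ)^2 = y^(2*μ) := by
      rw [← Real.rpow_natCast (y^μ) 2, ← Real.rpow_mul hy.le]
      norm_num [mul_comm]
    have e2 : (t^μ)^2 = t^(2*μ) := by
      rw [← Real.rpow_natCast (t^μ) 2, ← Real.rpow_mul ht.le]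
      norm_num [mul_comm]
    have e3 : -(α/μ/2) = -(α/(2*μ)) := by rw [div_div, mul_comm μ 2]
    rw [e1, e2, e3, mul_comm, ← eq_div_iff hμne] at hsub
    rw [hsub]
    ring
  -- iterated integral form and Fubini
  have step1 : ∫ x in Ioi (0:ℝ), x ^ (α - 1) * Real.exp (-(y ^ μ * x ^ μ)) *
        ∫ t in Ioi (0:ℝ), t ^ (δ - 1) * Real.cos (x ^ μ * t ^ μ) * f t
      = ∫ x in Ioi (0:ℝ), ∫ t in Ioi (0:ℝ),
          x ^ (α - 1) * Real.exp (-(y ^ μ * x ^ μ)) *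
            (t ^ (δ - 1) * Real.cos (x ^ μ * t ^ μ) * f t) := by
    refine setIntegral_congr_fun measurableSet_Ioi (fun x _ => ?_)
    rw [integral_const_mul]
  have step2 : ∫ x in Ioi (0:ℝ), ∫ t in Ioi (0:ℝ),
        x ^ (α - 1) * Real.exp (-(y ^ μ * x ^ μ)) *
          (t ^ (δ - 1) * Real.cos (x ^ μ * t ^ μ) * f t)
      = ∫ t in Ioi (0:ℝ), ∫ x in Ioi (0:ℝ),
          x ^ (α - 1) * Real.exp (-(y ^ μ * x ^ μ)) *
            (t ^ (δ - 1) * Real.cos (x ^ μ * t ^ μ) * f t) := by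
    refine integral_integral_swap ?_
    rw [Measure.prod_restrict, ← Measure.volume_eq_prod]
    exact hint
  rw [step1, step2, ← integral_const_mul]
  refine setIntegral_congr_fun measurableSet_Ioi (fun t ht => ?_)
  rw [mem_Ioi] at ht
  have h3 : ∫ x in Ioi (0:ℝ), x ^ (α - 1) * Real.exp (-(y ^ μ * x ^ μ)) *
        (t ^ (δ - 1) * Real.cos (x ^ μ * t ^ μ) * f t)
      = (t ^ (δ - 1) * f t) *
          ∫ x in Ioi (0:ℝ), x ^ (α-1) * Real.exp (-(y^μ * x^μ)) * Real.cos (x^μ * t^μ) := by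
    rw [← integral_const_mul]
    refine setIntegral_congr_fun measurableSet_Ioi (fun x _ => ?_)
    ring
  rw [h3, key t ht]
  ring
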